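/- arXiv:1012.2389 — 4 statements merged into one kernel-verified Lean document; each statement's English description precedes it below -/
import Mathlib

section
/- Let L be a (right) Leibniz algebra over ℂ containing elements e_1, …, e_n (n ≥ 9) with [e_i, e_1] = e_{i+1} for 1 ≤ i ≤ n-1, i ≠ 3, [e_3,e_1] = [e_n,e_1] = 0, and suppose e_2, e_3 ∈ R(L) and [e_i, e_4] = β_i e_{i+1} for 6 ≤ i ≤ n-1 with [e_n, e_4] = 0, [e_3, e_4] = β_3 e_7, [e_5, e_4] = α_4 e_3 + β_5 e_6. Then for all 5 ≤ i ≤ n-3 and 6 ≤ j ≤ n+3-i: [e_i, e_j] = (Σ_{k=0}^{j-4} (-1)^k C(j-4, k) β_{i+k}) e_{i+j-3}. -/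
open Finset

noncomputable def binS (β : ℕ → ℂ) (i m : ℕ) : ℂ :=
  ∑ k ∈ Finset.range (m + 1), (-1 : ℂ) ^ k * (m.choose k : ℂ) * β (i + k)

lemma binS_pascal (β : ℕ → ℂ) (i m : ℕ) :
    binS β i (m + 1) = binS β i m - binS β (i + 1) m := by
  unfold binS
  rw [Finset.sum_range_succ' (fun k => (-1 : ℂ) ^ k * ((m+1).choose k : ℂ) * β (i + k)) (m+1)]
  have hsplit : ∀ k ∈ Finset.range (m+1),
      (-1 : ℂ) ^ (k+1) * ((m+1).choose (k+1) : ℂ) * β (i + (k+1)) =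
      -((-1 : ℂ) ^ k * (m.choose k : ℂ) * β ((i+1) + k)) +
        (-1 : ℂ) ^ (k+1) * (m.choose (k+1) : ℂ) * β (i + (k+1)) := by
    intro k _
    have : ((m+1).choose (k+1) : ℂ) = (m.choose k : ℂ) + (m.choose (k+1) : ℂ) := by
      rw [Nat.choose_succ_succ]; push_cast; ring
    rw [this]
    have hb : i + (k + 1) = (i + 1) + k := by omega
    rw [hb]; ring
  rw [Finset.sum_congr rfl hsplit, Finset.sum_add_distrib, Finset.sum_neg_distrib]
  have hT : ∑ k ∈ Finset.range (m+1), (-1 : ℂ) ^ (k+1) * (m.choose (k+1) : ℂ) * β (i + (k+1)) =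
      (∑ k ∈ Finset.range (m + 1), (-1 : ℂ) ^ k * (m.choose k : ℂ) * β (i + k)) -
        (-1 : ℂ) ^ 0 * (m.choose 0 : ℂ) * β (i + 0) := by
    rw [Finset.sum_range_succ' (fun k => (-1 : ℂ) ^ k * (m.choose k : ℂ) * β (i + k)) m]
    rw [Finset.sum_range_succ]
    simp [Nat.choose_succ_self]
  rw [hT]
  simp; ring

open Finset in
/-- The binomial formula
`[eᵢ,eⱼ] = (Σ_{k=0}^{j-4} (-1)^k C(j-4,k) β_{i+k}) e_{i+j-3}` for
`5 ≤ i ≤ n-3`, `6 ≤ j ≤ n+3-i`, in a Leibniz algebra with the stated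
products. -/
theorem binomial_bracket_formula
    {L : Type*} [AddCommGroup L] [Module ℂ L]
    (br : L →ₗ[ℂ] L →ₗ[ℂ] L)
    (hLeib : ∀ x y z : L, br x (br y z) = br (br x y) z - br (br x z) y)
    (n : ℕ) (hn : 9 ≤ n) (e : ℕ → L) (β : ℕ → ℂ) (α₄ : ℂ)
    (hchain : ∀ i : ℕ, 1 ≤ i → i ≤ n - 1 → i ≠ 3 →
      br (e i) (e 1) = e (i + 1))
    (h31 : br (e 3) (e 1) = 0)
    (hn1 : br (e n) (e 1) = 0)
    (h2ann : ∀ w : L, br w (e 2) = 0)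
    (h3ann : ∀ w : L, br w (e 3) = 0)
    (h4 : ∀ i : ℕ, 6 ≤ i → i ≤ n - 1 → br (e i) (e 4) = β i • e (i + 1))
    (hn4 : br (e n) (e 4) = 0)
    (h34 : br (e 3) (e 4) = β 3 • e 7)
    (h54 : br (e 5) (e 4) = α₄ • e 3 + β 5 • e 6) :
    ∀ i j : ℕ, 5 ≤ i → i ≤ n - 3 → 6 ≤ j → j ≤ n + 3 - i →
      br (e i) (e j) =
        (∑ k ∈ Finset.range (j - 3),
          (-1 : ℂ) ^ k * ((j - 4).choose k : ℂ) * β (i + k)) •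
            e (i + j - 3) := by
  -- key lemma for i ≥ 6, by induction on j ≥ 4
  have keyA : ∀ j : ℕ, 4 ≤ j → ∀ i : ℕ, 6 ≤ i → i + j ≤ n + 3 →
      br (e i) (e j) = binS β i (j - 4) • e (i + j - 3) := by
    intro j hj
    induction j, hj using Nat.le_induction with
    | base =>
      intro i hi hij
      have : binS β i 0 = β i := by simp [binS]
      rw [this]
      have h1 : i + 4 - 3 = i + 1 := by omega
      rw [h1]
      exact h4 i hi (by omega)
    | succ j hj ih =>
      intro i hi hij
      have hej : e (j + 1) = br (e j) (e 1) :=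
        (hchain j (by omega) (by omega) (by omega)).symm
      rw [hej, hLeib, ih i hi (by omega),
        hchain i (by omega) (by omega) (by omega),
        ih (i + 1) (by omega) (by omega),
        map_smul, LinearMap.smul_apply,
        hchain (i + j - 3) (by omega) (by omega) (by omega)]
      have h1 : i + j - 3 + 1 = i + (j + 1) - 3 := by omega
      have h2 : i + 1 + j - 3 = i + (j + 1) - 3 := by omega
      have h3 : j + 1 - 4 = (j - 4) + 1 := by omega
      rw [h1, h2, h3, ← sub_smul, binS_pascal]
  -- key lemma for i = 5, by induction on j ≥ 5
  have keyB : ∀ j : ℕ, 5 ≤ j → 5 + j ≤ n + 3 →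
      br (e 5) (e j) = binS β 5 (j - 4) • e (5 + j - 3) := by
    intro j hj
    induction j, hj using Nat.le_induction with
    | base =>
      intro hij
      have he5 : e 5 = br (e 4) (e 1) :=
        (hchain 4 (by omega) (by omega) (by omega)).symm
      have h61 : br (e 6) (e 1) = e 7 := hchain 6 (by omega) (by omega) (by omega)
      have h64 : br (e 6) (e 4) = β 6 • e 7 := h4 6 (by omega) (by omega)
      calc br (e 5) (e 5) = br (e 5) (br (e 4) (e 1)) := by rw [← he5]
        _ = br (br (e 5) (e 4)) (e 1) - br (br (e 5) (e 1)) (e 4) := hLeib _ _ _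
        _ = br (α₄ • e 3 + β 5 • e 6) (e 1) - br (e 6) (e 4) := by
            rw [h54, hchain 5 (by omega) (by omega) (by omega)]
        _ = α₄ • br (e 3) (e 1) + β 5 • br (e 6) (e 1) - β 6 • e 7 := by
            rw [map_add, map_smul, map_smul, h64]
            simp
        _ = (β 5 - β 6) • e 7 := by
            rw [h31, h61, smul_zero, zero_add, sub_smul, sub_eq_add_neg]
        _ = binS β 5 (5 - 4) • e (5 + 5 - 3) := by
            norm_num [binS, Finset.sum_range_succ, sub_eq_add_neg]
    | succ j hj ih =>
      intro hij
      have hej : e (j + 1) = br (e j) (e 1) :=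
        (hchain j (by omega) (by omega) (by omega)).symm
      rw [hej, hLeib, ih (by omega),
        hchain 5 (by omega) (by omega) (by omega),
        keyA j (by omega) 6 (by omega) (by omega),
        map_smul, LinearMap.smul_apply,
        hchain (5 + j - 3) (by omega) (by omega) (by omega)]
      have h1 : 5 + j - 3 + 1 = 5 + (j + 1) - 3 := by omega
      have h2 : 6 + j - 3 = 5 + (j + 1) - 3 := by omega
      have h3 : j + 1 - 4 = (j - 4) + 1 := by omega
      have h4' : (5 : ℕ) + 1 = 6 := rfl
      rw [h1, h2, h3, ← sub_smul, binS_pascal, h4']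
  intro i j hi hin hj hjn
  have hij : i + j ≤ n + 3 := by omega
  have hgoal : (∑ k ∈ Finset.range (j - 3),
      (-1 : ℂ) ^ k * ((j - 4).choose k : ℂ) * β (i + k)) = binS β i (j - 4) := by
    unfold binS
    have : j - 3 = (j - 4) + 1 := by omega
    rw [this]
  rw [hgoal]
  rcases Nat.lt_or_ge i 6 with h6 | h6
  · have : i = 5 := by omega
    subst this
    exact keyB j (by omega) (by omega)
  · exact keyA j (by omega) i h6 hij
end

section
/- Let L be an n-dimensional vector space over ℂ (n ≥ 9) with basis e_1,…,e_n and bracket given by: [e_i,e_1] = e_{i+1} for 1 ≤ i ≤ n-1, i ≠ n-3, [e_1, e_{n-2}] = λ e_{n-1}, [e_2, e_{n-2}] = λ e_n, all other products of basis elements zero, where λ ∈ ℂ. Then L is a (right) Leibniz algebra (the algebra L^{34}_{(0,λ,0)}). -/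
/-- Auxiliary: the value of `br (br (e i) (e j)) (e k)` in the algebra `L³⁴`. -/
def L34aux {L : Type*} [AddCommGroup L] [Module ℂ L]
    (n : ℕ) (e : ℕ → L) (lam : ℂ) (i j k : ℕ) : L :=
  if j = 1 ∧ k = 1 ∧ i + 2 ≤ n ∧ i ≠ n - 3 ∧ i ≠ n - 4 then e (i + 2)
  else if ((j = 1 ∧ k = n - 2) ∨ (j = n - 2 ∧ k = 1)) ∧ i = 1 then lam • e n
  else 0

/-- The `n`-dimensional algebra (`n ≥ 9`) over `ℂ` with basis `e₁,…,eₙ` and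
nonzero products `[eᵢ,e₁] = e_{i+1}` (`1 ≤ i ≤ n-1`, `i ≠ n-3`),
`[e₁,e_{n-2}] = λ e_{n-1}`, `[e₂,e_{n-2}] = λ eₙ` is a (right) Leibniz
algebra (the algebra `L³⁴_{(0,λ,0)}`). -/
theorem L34_is_leibniz
    {L : Type*} [AddCommGroup L] [Module ℂ L]
    (n : ℕ) (hn : 9 ≤ n) (e : ℕ → L) (lam : ℂ)
    (hli : LinearIndependent ℂ (fun i : Fin n => e ((i : ℕ) + 1)))
    (hspan : Submodule.span ℂ (e '' Set.Icc 1 n) = ⊤)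
    (br : L →ₗ[ℂ] L →ₗ[ℂ] L)
    (hchain : ∀ i : ℕ, 1 ≤ i → i ≤ n - 1 → i ≠ n - 3 →
      br (e i) (e 1) = e (i + 1))
    (h1 : br (e 1) (e (n - 2)) = lam • e (n - 1))
    (h2 : br (e 2) (e (n - 2)) = lam • e n)
    (hzero : ∀ i j : ℕ, 1 ≤ i → i ≤ n → 1 ≤ j → j ≤ n →
      ¬(j = 1 ∧ i ≤ n - 1 ∧ i ≠ n - 3) →
      ¬(j = n - 2 ∧ (i = 1 ∨ i = 2)) →
      br (e i) (e j) = 0) :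
    ∀ x y z : L, br x (br y z) = br (br x y) z - br (br x z) y := by
  have hmemtop : ∀ x : L, x ∈ Submodule.span ℂ (e '' Set.Icc 1 n) := fun x => by
    rw [hspan]; exact Submodule.mem_top
  -- e s kills everything from the right except s = 1 or s = n - 2
  have hoz : ∀ i s : ℕ, 1 ≤ i → i ≤ n → 2 ≤ s → s ≤ n → s ≠ n - 2 →
      br (e i) (e s) = 0 := by
    intro i s a b c d f
    exact hzero i s a b (by omega) d (by omega) (by omega)
  -- the left-hand side always vanishes on basis vectors
  have hLHS : ∀ i j k : ℕ, 1 ≤ i → i ≤ n → 1 ≤ j → j ≤ n → 1 ≤ k → k ≤ n →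
      br (e i) (br (e j) (e k)) = 0 := by
    intro i j k hi1 hi2 hj1 hj2 hk1 hk2
    by_cases hk : k = 1
    · subst hk
      by_cases hj : j ≤ n - 1 ∧ j ≠ n - 3
      · rw [hchain j hj1 hj.1 hj.2]
        exact hoz i (j + 1) hi1 hi2 (by omega) (by omega) (by omega)
      · rw [hzero j 1 hj1 hj2 (by omega) (by omega) (by omega) (by omega)]
        simp
    · by_cases hk' : k = n - 2
      · subst hk'
        by_cases hj : j = 1
        · subst hj
          rw [h1, map_smul]
          rw [hoz i (n - 1) hi1 hi2 (by omega) (by omega) (by omega), smul_zero]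
        · by_cases hj' : j = 2
          · subst hj'
            rw [h2, map_smul]
            rw [hoz i n hi1 hi2 (by omega) le_rfl (by omega), smul_zero]
          · rw [hzero j (n - 2) hj1 hj2 (by omega) (by omega) (by omega) (by omega)]
            simp
      · rw [hzero j k hj1 hj2 hk1 hk2 (by omega) (by omega)]
        simp
  -- the double bracket computes to `L34aux`
  have hS : ∀ i j k : ℕ, 1 ≤ i → i ≤ n → 1 ≤ j → j ≤ n → 1 ≤ k → k ≤ n →
      br (br (e i) (e j)) (e k) = L34aux n e lam i j k := by
    intro i j k hi1 hi2 hj1 hj2 hk1 hk2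
    by_cases hj : j = 1 ∧ i ≤ n - 1 ∧ i ≠ n - 3
    · obtain ⟨rfl, hi', hi''⟩ := hj
      rw [hchain i hi1 hi' hi'']
      by_cases hk : k = 1 ∧ i + 1 ≤ n - 1 ∧ i + 1 ≠ n - 3
      · obtain ⟨rfl, a, b⟩ := hk
        rw [hchain (i + 1) (by omega) a b]
        have h12 : i + 1 + 1 = i + 2 := by omega
        rw [h12, L34aux, if_pos (by omega)]
      · by_cases hk' : k = n - 2 ∧ i = 1
        · obtain ⟨rfl, rfl⟩ := hk'
          have h11 : (1 : ℕ) + 1 = 2 := rfl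
          rw [h11, h2, L34aux, if_neg (by omega), if_pos (by omega)]
        · rw [hzero (i + 1) k (by omega) (by omega) hk1 hk2 (by omega) (by omega)]
          rw [L34aux, if_neg (by omega), if_neg (by omega)]
    · by_cases hj' : j = n - 2 ∧ i = 1
      · obtain ⟨rfl, rfl⟩ := hj'
        rw [h1, map_smul, LinearMap.smul_apply]
        by_cases hk : k = 1
        · subst hk
          rw [hchain (n - 1) (by omega) (by omega) (by omega)]
          have hnn : n - 1 + 1 = n := by omega
          rw [hnn, L34aux, if_neg (by omega), if_pos (by omega)]
        · rw [hzero (n - 1) k (by omega) (by omega) hk1 hk2 (by omega) (by omega),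
            smul_zero, L34aux, if_neg (by omega), if_neg (by omega)]
      · by_cases hj'' : j = n - 2 ∧ i = 2
        · obtain ⟨rfl, rfl⟩ := hj''
          rw [h2, map_smul, LinearMap.smul_apply]
          rw [hzero n k (by omega) le_rfl hk1 hk2 (by omega) (by omega),
            smul_zero, L34aux, if_neg (by omega), if_neg (by omega)]
        · rw [hzero i j hi1 hi2 hj1 hj2 (by omega) (by omega), map_zero,
            LinearMap.zero_apply, L34aux, if_neg (by omega), if_neg (by omega)]
  have hsymm : ∀ i j k : ℕ, L34aux n e lam i j k = L34aux n e lam i k j := by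
    intro i j k
    rw [L34aux, L34aux]
    split_ifs <;> first | rfl | omega
  -- the identity on basis vectors
  have key : ∀ i j k : ℕ, 1 ≤ i → i ≤ n → 1 ≤ j → j ≤ n → 1 ≤ k → k ≤ n →
      br (e i) (br (e j) (e k)) =
        br (br (e i) (e j)) (e k) - br (br (e i) (e k)) (e j) := by
    intro i j k hi1 hi2 hj1 hj2 hk1 hk2
    rw [hLHS i j k hi1 hi2 hj1 hj2 hk1 hk2,
      hS i j k hi1 hi2 hj1 hj2 hk1 hk2,
      hS i k j hi1 hi2 hk1 hk2 hj1 hj2,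
      hsymm i j k, sub_self]
  -- extend by linearity: third slot
  have key3 : ∀ i j : ℕ, 1 ≤ i → i ≤ n → 1 ≤ j → j ≤ n → ∀ z : L,
      br (e i) (br (e j) z) = br (br (e i) (e j)) z - br (br (e i) z) (e j) := by
    intro i j hi1 hi2 hj1 hj2 z
    refine Submodule.span_induction ?_ ?_ ?_ ?_ (hmemtop z)
    · rintro _ ⟨k, hk, rfl⟩
      exact key i j k hi1 hi2 hj1 hj2 hk.1 hk.2
    · simp
    · intro a b _ _ ha hb
      simp only [map_add, LinearMap.add_apply, ha, hb]
      abel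
    · intro c a _ ha
      simp only [map_smul, LinearMap.smul_apply, ha, smul_sub]
  -- second slot
  have key2 : ∀ i : ℕ, 1 ≤ i → i ≤ n → ∀ y z : L,
      br (e i) (br y z) = br (br (e i) y) z - br (br (e i) z) y := by
    intro i hi1 hi2 y
    refine Submodule.span_induction (p := fun y _ => ∀ z : L,
      br (e i) (br y z) = br (br (e i) y) z - br (br (e i) z) y)
      ?_ ?_ ?_ ?_ (hmemtop y)
    · rintro _ ⟨j, hj, rfl⟩ z
      exact key3 i j hi1 hi2 hj.1 hj.2 z
    · intro z; simp
    · intro a b _ _ ha hb z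
      simp only [map_add, LinearMap.add_apply, ha z, hb z]
      abel
    · intro c a _ ha z
      simp only [map_smul, LinearMap.smul_apply, ha z, smul_sub]
  -- first slot
  intro x y z
  refine Submodule.span_induction (p := fun x _ => ∀ y z : L,
    br x (br y z) = br (br x y) z - br (br x z) y)
    ?_ ?_ ?_ ?_ (hmemtop x) y z
  · rintro _ ⟨i, hi, rfl⟩ y z
    exact key2 i hi.1 hi.2 y z
  · intro y z; simp
  · intro a b _ _ ha hb y z
    simp only [map_add, LinearMap.add_apply, ha y z, hb y z]
    abel
  · intro c a _ ha y z
    simp only [map_smul, LinearMap.smul_apply, ha y z, smul_sub]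
end

section
/- Let L be an n-dimensional vector space over ℂ (n ≥ 9) with basis e_1,…,e_n and bracket [e_i,e_1] = e_{i+1} for 1 ≤ i ≤ n-1, i ≠ n-3, [e_1,e_{n-2}] = -e_{n-1}, [e_2,e_{n-2}] = -(1+λ) e_n, [e_1, e_{n-1}] = λ e_n, all other basis products zero, for λ ∈ ℂ. Then L is a (right) Leibniz algebra (the algebra L^{38}_{(0,0,λ)}). -/
set_option maxHeartbeats 4000000 in
/-- The `n`-dimensional algebra (`n ≥ 9`) over `ℂ` with basis `e₁,…,eₙ` and
nonzero products `[eᵢ,e₁] = e_{i+1}` (`1 ≤ i ≤ n-1`, `i ≠ n-3`),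
`[e₁,e_{n-2}] = -e_{n-1}`, `[e₂,e_{n-2}] = -(1+λ)eₙ`, `[e₁,e_{n-1}] = λ eₙ`
is a (right) Leibniz algebra (the algebra `L³⁸_{(0,0,λ)}`). -/
theorem L38_is_leibniz
    {L : Type*} [AddCommGroup L] [Module ℂ L]
    (n : ℕ) (hn : 9 ≤ n) (e : ℕ → L) (lam : ℂ)
    (hli : LinearIndependent ℂ (fun i : Fin n => e ((i : ℕ) + 1)))
    (hspan : Submodule.span ℂ (e '' Set.Icc 1 n) = ⊤)
    (br : L →ₗ[ℂ] L →ₗ[ℂ] L)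
    (hchain : ∀ i : ℕ, 1 ≤ i → i ≤ n - 1 → i ≠ n - 3 →
      br (e i) (e 1) = e (i + 1))
    (h1 : br (e 1) (e (n - 2)) = -e (n - 1))
    (h2 : br (e 2) (e (n - 2)) = -(1 + lam) • e n)
    (h3 : br (e 1) (e (n - 1)) = lam • e n)
    (hzero : ∀ i j : ℕ, 1 ≤ i → i ≤ n → 1 ≤ j → j ≤ n →
      ¬(j = 1 ∧ i ≤ n - 1 ∧ i ≠ n - 3) →
      ¬(j = n - 2 ∧ (i = 1 ∨ i = 2)) →
      ¬(j = n - 1 ∧ i = 1) →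
      br (e i) (e j) = 0) :
    ∀ x y z : L, br x (br y z) = br (br x y) z - br (br x z) y := by
  have hmem : ∀ w : L, w ∈ Submodule.span ℂ (e '' Set.Icc 1 n) := by
    intro w; rw [hspan]; exact Submodule.mem_top
  -- complete multiplication table
  have hB : ∀ i j : ℕ, 1 ≤ i → i ≤ n → 1 ≤ j → j ≤ n →
      br (e i) (e j) =
        if j = 1 ∧ i ≤ n - 1 ∧ i ≠ n - 3 then e (i + 1)
        else if i = 1 ∧ j = n - 2 then -e (n - 1)
        else if i = 2 ∧ j = n - 2 then -(1 + lam) • e n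
        else if i = 1 ∧ j = n - 1 then lam • e n
        else 0 := by
    intro i j hi1 hi2 hj1 hj2
    split_ifs with c1 c2 c3 c4
    · obtain ⟨rfl, hle, hne⟩ := c1
      exact hchain i hi1 hle hne
    · obtain ⟨rfl, rfl⟩ := c2
      exact h1
    · obtain ⟨rfl, rfl⟩ := c3
      exact h2
    · obtain ⟨rfl, rfl⟩ := c4
      exact h3
    · exact hzero i j hi1 hi2 hj1 hj2 (by tauto) (by tauto) (by tauto)
  -- the Leibniz identity on basis vectors
  have key : ∀ i j k : ℕ, 1 ≤ i → i ≤ n → 1 ≤ j → j ≤ n → 1 ≤ k → k ≤ n →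
      br (e i) (br (e j) (e k)) =
        br (br (e i) (e j)) (e k) - br (br (e i) (e k)) (e j) := by
    intro i j k hi1 hi2 hj1 hj2 hk1 hk2
    have hnn : n - 1 + 1 = n := by omega
    by_cases hjk : j = k
    · subst hjk
      rw [sub_self]
      rw [hB j j hj1 hj2 hj1 hj2]
      split_ifs with c1 c2 c3 c4
      · obtain ⟨rfl, -, -⟩ := c1
        rw [hB i (1+1) hi1 hi2 (by omega) (by omega)]
        rw [if_neg (by omega), if_neg (by omega), if_neg (by omega),
          if_neg (by omega)]
      · exact absurd c2 (by omega)
      · exact absurd c3 (by omega)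
      · exact absurd c4 (by omega)
      · exact map_zero _
    · rw [hB j k hj1 hj2 hk1 hk2, hB i j hi1 hi2 hj1 hj2, hB i k hi1 hi2 hk1 hk2]
      split_ifs
      all_goals try (exfalso; omega)
      all_goals simp only [map_neg, map_smul, map_zero, LinearMap.neg_apply,
        LinearMap.smul_apply, LinearMap.zero_apply]
      all_goals simp (disch := omega) only [hB, if_pos, if_neg, hnn, map_neg,
        map_smul, map_zero, LinearMap.neg_apply, LinearMap.smul_apply,
        LinearMap.zero_apply, sub_zero, zero_sub, neg_neg, neg_zero, smul_zero,
        and_true, true_and]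
      all_goals first
        | rfl
        | (exfalso; omega)
        | module
  -- extend to arbitrary third argument
  have key2 : ∀ i j : ℕ, 1 ≤ i → i ≤ n → 1 ≤ j → j ≤ n → ∀ z : L,
      br (e i) (br (e j) z) = br (br (e i) (e j)) z - br (br (e i) z) (e j) := by
    intro i j hi1 hi2 hj1 hj2 z
    induction hmem z using Submodule.span_induction with
    | mem w hw =>
        obtain ⟨k, hk, rfl⟩ := hw
        exact key i j k hi1 hi2 hj1 hj2 hk.1 hk.2
    | zero => simp
    | add a b _ _ ha hb =>
        simp only [map_add, LinearMap.add_apply]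
        rw [ha, hb]; abel
    | smul c a _ ha =>
        simp only [map_smul, LinearMap.smul_apply]
        rw [ha, smul_sub]
  -- extend to arbitrary second argument
  have key3 : ∀ i : ℕ, 1 ≤ i → i ≤ n → ∀ y z : L,
      br (e i) (br y z) = br (br (e i) y) z - br (br (e i) z) y := by
    intro i hi1 hi2 y
    induction hmem y using Submodule.span_induction with
    | mem w hw =>
        obtain ⟨j, hj, rfl⟩ := hw
        exact key2 i j hi1 hi2 hj.1 hj.2
    | zero => intro z; simp
    | add a b _ _ ha hb =>
        intro z
        simp only [map_add, LinearMap.add_apply]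
        rw [ha z, hb z]; abel
    | smul c a _ ha =>
        intro z
        simp only [map_smul, LinearMap.smul_apply]
        rw [ha z, smul_sub]
  -- extend to arbitrary first argument
  intro x
  induction hmem x using Submodule.span_induction with
  | mem w hw =>
      obtain ⟨i, hi, rfl⟩ := hw
      exact key3 i hi.1 hi.2
  | zero => intro y z; simp
  | add a b _ _ ha hb =>
      intro y z
      simp only [map_add, LinearMap.add_apply]
      rw [ha y z, hb y z]; abel
  | smul c a _ ha =>
      intro y z
      simp only [map_smul, LinearMap.smul_apply]
      rw [ha y z, smul_sub]
end

section
/- Let L be a (right) Leibniz algebra containing linearly independent elements with [e_i,e_1] = e_{i+1} for 1 ≤ i ≤ n-1, i ≠ n-3, and suppose e_2,…,e_{n-3} ∈ R(L) and e_{n-1} ∈ R(L), with [e_1,e_{n-2}] = α_1 e_2 + α_2 e_{n-1} and [e_{n-2},e_{n-2}] = β_1 e_2 + β_2 e_{n-1}. Then the Leibniz identity forces β_1 = 0 and [e_2,e_{n-2}] = α_1 e_3 + α_2 e_n, [e_i,e_{n-2}] = α_1 e_{i+1} for 3 ≤ i ≤ n-4, and [e_i,e_{n-2}] = β_2 e_{i+1}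 for i = n-2, n-1. -/
/-- In a (right) Leibniz algebra with linearly independent `e₁,…,eₙ`
(`n ≥ 9`), `[eᵢ,e₁] = e_{i+1}` (`1 ≤ i ≤ n-1`, `i ≠ n-3`),
`e₂,…,e_{n-3} ∈ R(L)`, `e_{n-1} ∈ R(L)`,
`[e₁,e_{n-2}] = α₁e₂ + α₂e_{n-1}` and `[e_{n-2},e_{n-2}] = β₁e₂ + β₂e_{n-1}`,
the Leibniz identity forces `β₁ = 0`, `[e₂,e_{n-2}] = α₁e₃ + α₂eₙ`,
`[eᵢ,e_{n-2}] = α₁e_{i+1}` for `3 ≤ i ≤ n-4`, and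
`[eᵢ,e_{n-2}] = β₂e_{i+1}` for `i = n-2, n-1`. -/
theorem type_one_case_en1_in_R
    {K L : Type*} [Field K] [AddCommGroup L] [Module K L]
    (br : L →ₗ[K] L →ₗ[K] L)
    (hLeib : ∀ x y z : L, br x (br y z) = br (br x y) z - br (br x z) y)
    (n : ℕ) (hn : 9 ≤ n) (e : ℕ → L) (α₁ α₂ β₁ β₂ : K)
    (hli : LinearIndependent K (fun i : Fin n => e ((i : ℕ) + 1)))
    (hchain : ∀ i : ℕ, 1 ≤ i → i ≤ n - 1 → i ≠ n - 3 →
      br (e i) (e 1) = e (i + 1))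
    (hn31 : br (e (n - 3)) (e 1) = 0)
    (hne1 : br (e n) (e 1) = 0)
    (hann : ∀ i : ℕ, 2 ≤ i → i ≤ n - 3 → ∀ w : L, br w (e i) = 0)
    (hann1 : ∀ w : L, br w (e (n - 1)) = 0)
    (h1 : br (e 1) (e (n - 2)) = α₁ • e 2 + α₂ • e (n - 1))
    (h2 : br (e (n - 2)) (e (n - 2)) = β₁ • e 2 + β₂ • e (n - 1)) :
    β₁ = 0 ∧
    br (e 2) (e (n - 2)) = α₁ • e 3 + α₂ • e n ∧
    (∀ i : ℕ, 3 ≤ i → i ≤ n - 4 → br (e i) (e (n - 2)) = α₁ • e (i + 1)) ∧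
    br (e (n - 2)) (e (n - 2)) = β₂ • e (n - 1) ∧
    br (e (n - 1)) (e (n - 2)) = β₂ • e n := by
  have hz2 : ∀ w : L, br w (e 2) = 0 := hann 2 (by omega) (by omega)
  -- key recursion
  have key : ∀ i : ℕ, 1 ≤ i → i ≤ n - 1 → i ≠ n - 3 →
      br (e (i + 1)) (e (n - 2)) = br (br (e i) (e (n - 2))) (e 1) := by
    intro i hi1 hi2 hi3
    have H := hLeib (e i) (e 1) (e (n - 2))
    rw [hchain i hi1 hi2 hi3, h1] at H
    simp only [map_add, map_smul, hz2, hann1, smul_zero, add_zero] at H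
    exact sub_eq_zero.mp H.symm
  have hn11 : n - 1 + 1 = n := by omega
  -- [e₂, e_{n-2}]
  have c2 : br (e 2) (e (n - 2)) = α₁ • e 3 + α₂ • e n := by
    rw [key 1 (by omega) (by omega) (by omega), h1]
    simp only [map_add, map_smul, LinearMap.add_apply, LinearMap.smul_apply]
    rw [hchain 2 (by omega) (by omega) (by omega),
      hchain (n - 1) (by omega) (by omega) (by omega), hn11]
  -- main chain
  have main : ∀ i : ℕ, 3 ≤ i → i ≤ n - 4 → br (e i) (e (n - 2)) = α₁ • e (i + 1) := by
    intro i
    induction i with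
    | zero => omega
    | succ j ih =>
      intro hi3 hi4
      rcases eq_or_lt_of_le hi3 with h | h
      · have hj : j = 2 := by omega
        subst hj
        rw [key 2 (by omega) (by omega) (by omega), c2]
        simp only [map_add, map_smul, LinearMap.add_apply, LinearMap.smul_apply]
        rw [hchain 3 (by omega) (by omega) (by omega), hne1, smul_zero, add_zero]
      · rw [key j (by omega) (by omega) (by omega), ih (by omega) (by omega), map_smul,
          LinearMap.smul_apply, hchain (j + 1) (by omega) (by omega) (by omega)]
  -- [e_{n-1}, e_{n-2}]
  have hn21 : n - 2 + 1 = n - 1 := by omega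
  have cn1 : br (e (n - 1)) (e (n - 2)) = β₁ • e 3 + β₂ • e n := by
    have := key (n - 2) (by omega) (by omega) (by omega)
    rw [hn21, h2] at this
    rw [this]
    simp only [map_add, map_smul, LinearMap.add_apply, LinearMap.smul_apply]
    rw [hchain 2 (by omega) (by omega) (by omega),
      hchain (n - 1) (by omega) (by omega) (by omega), hn11]
  -- [e_n, e_{n-2}]
  have cn : br (e n) (e (n - 2)) = β₁ • e 4 := by
    have := key (n - 1) (by omega) (by omega) (by omega)
    rw [hn11, cn1] at this
    rw [this]
    simp only [map_add, map_smul, LinearMap.add_apply, LinearMap.smul_apply]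
    rw [hchain 3 (by omega) (by omega) (by omega), hne1, smul_zero, add_zero]
  -- the e_n relation forces β₁ = 0
  have keyN : br (br (e n) (e (n - 2))) (e 1) = 0 := by
    have H := hLeib (e n) (e 1) (e (n - 2))
    rw [hne1, h1] at H
    simp only [map_add, map_smul, hz2, hann1, smul_zero, add_zero, map_zero,
      LinearMap.zero_apply, zero_sub] at H
    exact (neg_eq_zero.mp H.symm)
  rw [cn, map_smul, LinearMap.smul_apply,
    hchain 4 (by omega) (by omega) (by omega)] at keyN
  have he5 : e 5 ≠ 0 := by
    have := hli.ne_zero ⟨4, by omega⟩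
    simpa using this
  have hb1 : β₁ = 0 := by
    rcases smul_eq_zero.mp keyN with h | h
    · exact h
    · exact absurd h he5
  subst hb1
  refine ⟨rfl, c2, main, by rw [h2, zero_smul, zero_add], by rw [cn1, zero_smul, zero_add]⟩
end
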